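/- Let f : ℝⁿ → ℝ be differentiable with ∇f Lipschitz continuous with constant κ_lg > 0, and suppose ∇f(x) is s-sparse at the point x ∈ ℝⁿ. Let σ > 0 and v¹, …, v^p ∈ ℝⁿ with ‖vʲ‖ ≤ κ_bv for all j, let A ∈ ℝ^{p×n} be the matrix whose j-th row is (vʲ)ᵀ, and let y ∈ ℝ^p have entries yʲ = f(x + σvʲ) − f(x). Assume A has the s-sparse ℓ1-recovery property with constant c₁ > 0. Set ξ = (√p/2) κ_lg κ_bv² σ. Then every minimizer g of ‖g‖₁ over {g ∈ ℝⁿ : ‖Ag − σ⁻¹y‖ ≤ ξ} satisfies ‖g − ∇f(x)‖ ≤ (√p/2) c₁ κ_lg κ_bv² σ. -/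

import Mathlib

open Filter Matrix MeasureTheory

/-- The map `x ↦ A x` from `ℝⁿ` to `ℝᵖ` with the Euclidean (`ℓ²`) structure. -/
noncomputable def mulVecE {p n : ℕ} (A : Matrix (Fin p) (Fin n) ℝ)
    (x : EuclideanSpace ℝ (Fin n)) : EuclideanSpace ℝ (Fin p) :=
  (WithLp.equiv 2 (Fin p → ℝ)).symm (A.mulVec ((WithLp.equiv 2 (Fin n → ℝ)) x))

/-- The `ℓ¹` norm on `ℝⁿ`. -/
noncomputable def oneNorm {n : ℕ} (x : EuclideanSpace ℝ (Fin n)) : ℝ :=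
  ∑ i, |x i|

/-- `x` is `s`-sparse: it has at most `s` nonzero entries. -/
def IsSparse {n : ℕ} (s : ℕ) (x : EuclideanSpace ℝ (Fin n)) : Prop :=
  (Finset.univ.filter fun i => x i ≠ 0).card ≤ s

/-- `A` has the `s`-sparse `ℓ¹`-recovery property with constant `c₁`:
for every `s`-sparse `x̂`, every `ξ ≥ 0`, and every `y` with `‖A x̂ − y‖ ≤ ξ`,
every minimizer of the `ℓ¹` norm over `{x : ‖A x − y‖ ≤ ξ}` is within `c₁ ξ`
of `x̂` in Euclidean norm. -/
def RecoveryProperty {p n : ℕ} (s : ℕ) (A : Matrix (Fin p) (Fin n) ℝ)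
    (c₁ : ℝ) : Prop :=
  ∀ xhat : EuclideanSpace ℝ (Fin n), IsSparse s xhat →
    ∀ ξ : ℝ, 0 ≤ ξ →
      ∀ y : EuclideanSpace ℝ (Fin p), ‖mulVecE A xhat - y‖ ≤ ξ →
        ∀ xstar : EuclideanSpace ℝ (Fin n), ‖mulVecE A xstar - y‖ ≤ ξ →
          (∀ x : EuclideanSpace ℝ (Fin n), ‖mulVecE A x - y‖ ≤ ξ →
            oneNorm xstar ≤ oneNorm x) →
          ‖xstar - xhat‖ ≤ c₁ * ξ

open intervalIntegral in
open scoped RealInnerProductSpace in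
lemma descent_lemma {E : Type*} [NormedAddCommGroup E] [InnerProductSpace ℝ E] [CompleteSpace E]
    (f : E → ℝ) (g : E → E) (hf : ∀ z, HasGradientAt f (g z) z)
    (κ : ℝ) (hlip : ∀ a b, ‖g a - g b‖ ≤ κ * ‖a - b‖)
    (x u : E) : |f (x + u) - f x - ⟪g x, u⟫| ≤ κ / 2 * ‖u‖ ^ 2 := by
  have hgc : Continuous g := by
    have : LipschitzWith κ.toNNReal g := by
      apply LipschitzWith.of_dist_le_mul
      intro a b
      rw [dist_eq_norm, dist_eq_norm]
      exact (hlip a b).trans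
        (mul_le_mul_of_nonneg_right (Real.le_coe_toNNReal κ) (norm_nonneg _))
    exact this.continuous
  set φ : ℝ → ℝ := fun t => f (x + t • u) with hφdef
  have hline : ∀ t : ℝ, HasDerivAt (fun s : ℝ => x + s • u) u t := fun t => by
    simpa using ((hasDerivAt_id t).smul_const u).const_add x
  have hderiv : ∀ t : ℝ, HasDerivAt φ ⟪g (x + t • u), u⟫ t := by
    intro t
    have h1 := (hf (x + t • u)).hasFDerivAt.comp_hasDerivAt t (hline t)
    simp at h1
    exact h1
  have hcont : Continuous fun t : ℝ => ⟪g (x + t • u), u⟫ :=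
    (hgc.comp (by continuity)).inner continuous_const
  have hint : ∫ t in (0:ℝ)..1, ⟪g (x + t • u), u⟫ = φ 1 - φ 0 :=
    integral_eq_sub_of_hasDerivAt (fun t _ => hderiv t) (hcont.intervalIntegrable 0 1)
  have key : f (x + u) - f x - ⟪g x, u⟫
      = ∫ t in (0:ℝ)..1, ⟪g (x + t • u) - g x, u⟫ := by
    have : ∀ t : ℝ, ⟪g (x + t • u) - g x, u⟫ = ⟪g (x + t • u), u⟫ - ⟪g x, u⟫ :=
      fun t => inner_sub_left _ _ _
    simp only [this]
    rw [intervalIntegral.integral_sub (hcont.intervalIntegrable 0 1)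
      (intervalIntegrable_const), hint, intervalIntegral.integral_const]
    simp [hφdef]
  rw [key]
  have hbound : |∫ t in (0:ℝ)..1, ⟪g (x + t • u) - g x, u⟫|
      ≤ ∫ t in (0:ℝ)..1, |⟪g (x + t • u) - g x, u⟫| := by
    exact abs_integral_le_integral_abs (by norm_num)
  refine hbound.trans ?_
  have hmono : ∫ t in (0:ℝ)..1, |⟪g (x + t • u) - g x, u⟫|
      ≤ ∫ t in (0:ℝ)..1, κ * ‖u‖ ^ 2 * t := by
    apply intervalIntegral.integral_mono_on (by norm_num)
      ((continuous_abs.comp ((hgc.comp (by continuity : Continuous fun t : ℝ => x + t • u)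
        |>.sub continuous_const).inner continuous_const)).intervalIntegrable 0 1)
      ((by continuity : Continuous fun t : ℝ => κ * ‖u‖ ^ 2 * t).intervalIntegrable 0 1)
    intro t ht
    calc |⟪g (x + t • u) - g x, u⟫| ≤ ‖g (x + t • u) - g x‖ * ‖u‖ :=
          abs_real_inner_le_norm _ _
      _ ≤ (κ * ‖t • u‖) * ‖u‖ := by
          refine mul_le_mul_of_nonneg_right ?_ (norm_nonneg _)
          simpa using hlip (x + t • u) x
      _ = κ * ‖u‖ ^ 2 * t := by
          rw [norm_smul, Real.norm_eq_abs, abs_of_nonneg ht.1]; ring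
  refine hmono.trans ?_
  rw [intervalIntegral.integral_const_mul, integral_id]
  ring_nf
  exact le_refl _

theorem sparse_gradient_model_accuracy {n p : ℕ}
    (f : EuclideanSpace ℝ (Fin n) → ℝ)
    (g : EuclideanSpace ℝ (Fin n) → EuclideanSpace ℝ (Fin n))
    (hf : ∀ z, HasGradientAt f (g z) z)
    (κlg : ℝ) (hκlg : 0 < κlg)
    (hlip : ∀ y z, ‖g y - g z‖ ≤ κlg * ‖y - z‖)
    (s : ℕ) (x : EuclideanSpace ℝ (Fin n)) (hsparse : IsSparse s (g x))
    (σ : ℝ) (hσ : 0 < σ)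
    (v : Fin p → EuclideanSpace ℝ (Fin n)) (κbv : ℝ)
    (hv : ∀ j, ‖v j‖ ≤ κbv)
    (A : Matrix (Fin p) (Fin n) ℝ) (hA : ∀ j i, A j i = v j i)
    (y : EuclideanSpace ℝ (Fin p)) (hy : ∀ j, y j = f (x + σ • v j) - f x)
    (c₁ : ℝ) (hc₁ : 0 < c₁) (hrec : RecoveryProperty s A c₁)
    (ξ : ℝ) (hξ : ξ = (Real.sqrt p / 2) * κlg * κbv ^ 2 * σ)
    (gsol : EuclideanSpace ℝ (Fin n))
    (hfeas : ‖mulVecE A gsol - σ⁻¹ • y‖ ≤ ξ)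
    (hmin : ∀ g' : EuclideanSpace ℝ (Fin n), ‖mulVecE A g' - σ⁻¹ • y‖ ≤ ξ →
      oneNorm gsol ≤ oneNorm g') :
    ‖gsol - g x‖ ≤ (Real.sqrt p / 2) * c₁ * κlg * κbv ^ 2 * σ := by
  classical
  have hb : (0:ℝ) ≤ κlg / 2 * κbv ^ 2 * σ := by positivity
  have hξ0 : 0 ≤ ξ := by rw [hξ]; positivity
  have happ : ∀ (z : EuclideanSpace ℝ (Fin n)) (j : Fin p),
      mulVecE A z j = ∑ i, A j i * z i := by
    intro z j
    simp [mulVecE, Matrix.mulVec, dotProduct]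
  have hcomp : ∀ j, |(mulVecE A (g x) - σ⁻¹ • y) j| ≤ κlg / 2 * κbv ^ 2 * σ := by
    intro j
    have hdl := descent_lemma f g hf κlg hlip x (σ • v j)
    have hinner : (inner ℝ (g x) (σ • v j) : ℝ) = σ * ∑ i, A j i * g x i := by
      rw [real_inner_smul_right]
      congr 1
      rw [PiLp.inner_apply]
      refine Finset.sum_congr rfl fun i _ => ?_
      simp [RCLike.inner_apply, hA, mul_comm]
    have hval : (mulVecE A (g x) - σ⁻¹ • y) j
        = σ⁻¹ * ((inner ℝ (g x) (σ • v j) : ℝ) - (f (x + σ • v j) - f x)) := by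
      have h0 : (mulVecE A (g x) - σ⁻¹ • y) j = mulVecE A (g x) j - σ⁻¹ * y j := by
        simp [PiLp.sub_apply, PiLp.smul_apply, smul_eq_mul]
      rw [h0, happ, hy j, hinner]
      field_simp
    rw [hval, abs_mul, abs_of_nonneg (inv_nonneg.mpr hσ.le), abs_sub_comm]
    have h2 : |f (x + σ • v j) - f x - (inner ℝ (g x) (σ • v j) : ℝ)|
        ≤ κlg / 2 * (σ ^ 2 * κbv ^ 2) := by
      refine hdl.trans ?_
      have hns : ‖σ • v j‖ ^ 2 = σ ^ 2 * ‖v j‖ ^ 2 := by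
        rw [norm_smul, mul_pow, Real.norm_eq_abs, sq_abs]
      rw [hns]
      have hvj : ‖v j‖ ^ 2 ≤ κbv ^ 2 := pow_le_pow_left₀ (norm_nonneg _) (hv j) 2
      have := mul_le_mul_of_nonneg_left hvj (sq_nonneg σ)
      nlinarith [hκlg.le]
    calc σ⁻¹ * |f (x + σ • v j) - f x - (inner ℝ (g x) (σ • v j) : ℝ)|
        ≤ σ⁻¹ * (κlg / 2 * (σ ^ 2 * κbv ^ 2)) :=
          mul_le_mul_of_nonneg_left h2 (inv_nonneg.mpr hσ.le)
      _ = κlg / 2 * κbv ^ 2 * σ := by field_simp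
  have hnorm : ‖mulVecE A (g x) - σ⁻¹ • y‖ ≤ ξ := by
    rw [EuclideanSpace.norm_eq]
    have hsum : ∑ j, ‖(mulVecE A (g x) - σ⁻¹ • y) j‖ ^ 2
        ≤ ∑ _j : Fin p, (κlg / 2 * κbv ^ 2 * σ) ^ 2 := by
      refine Finset.sum_le_sum fun j _ => ?_
      refine pow_le_pow_left₀ (norm_nonneg _) ?_ 2
      rw [Real.norm_eq_abs]; exact hcomp j
    calc Real.sqrt (∑ j, ‖(mulVecE A (g x) - σ⁻¹ • y) j‖ ^ 2)
        ≤ Real.sqrt ((p : ℝ) * (κlg / 2 * κbv ^ 2 * σ) ^ 2) :=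
          Real.sqrt_le_sqrt (by simpa using hsum)
      _ = Real.sqrt p * (κlg / 2 * κbv ^ 2 * σ) := by
          rw [Real.sqrt_mul (Nat.cast_nonneg p), Real.sqrt_sq hb]
      _ = ξ := by rw [hξ]; ring
  have hfin := hrec (g x) hsparse ξ hξ0 (σ⁻¹ • y) hnorm gsol hfeas hmin
  calc ‖gsol - g x‖ ≤ c₁ * ξ := hfin
    _ = Real.sqrt p / 2 * c₁ * κlg * κbv ^ 2 * σ := by rw [hξ]; ring
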